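/- Let c_1, c_2, c_3 be three positive constants and let u_1,…,u_k, v_1,…,v_k ∈ ℝ^d be such that for all i = 1,…,k, c_1 ≤ ‖u_i‖_∞ ≤ c_2 and c_1 ≤ ‖v_i‖_∞ ≤ c_2, and, if k ≥ 2, ∠(u_i, span{u_j: j ≠ i}) ≥ c_3 and ∠(v_i, span{v_j: j ≠ i}) ≥ c_3 for all i. Then there is a constant c depending only on k, d, c_1, c_2, c_3 such that ∠(span{u_1,…,u_k}, span{v_1,…,v_k}) ≤ c · max_{i=1,…,k} ‖v_i − u_i‖_∞. -/

import Mathlib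

set_option maxHeartbeats 1000000


open MeasureTheory Filter Set
open scoped RealInnerProductSpace

noncomputable section

abbrev Euc (n : ℕ) := EuclideanSpace ℝ (Fin n)

/-- The sup-norm `‖x‖_∞` of a vector. -/
def supNorm {n : ℕ} (x : Euc n) : ℝ := ⨆ i, |x i|

/-- The unit cube `[0,1]^n`. -/
def unitCube (n : ℕ) : Set (Euc n) := {x | ∀ i, x i ∈ Set.Icc (0:ℝ) 1}

/-- The uniform probability measure on `[0,1]^n`. -/
def cubeUniform (n : ℕ) : Measure (Euc n) := volume.restrict (unitCube n)

/-- The angle between two linear subspaces of `ℝ^d`: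
`max_{0 ≠ u ∈ H} min_{0 ≠ v ∈ K} arccos (⟨u,v⟩ / (‖u‖‖v‖))`. -/
def subAngle {d : ℕ} (H K : Submodule ℝ (Euc d)) : ℝ :=
  ⨆ u : {u : Euc d // u ∈ H ∧ u ≠ 0},
    ⨅ v : {v : Euc d // v ∈ K ∧ v ≠ 0},
      Real.arccos (⟪u.1, v.1⟫ / (‖u.1‖ * ‖v.1‖))

/-- The Grassmannian `G(k,d)` of `k`-dimensional linear subspaces of `ℝ^d`. -/
def Grass (k d : ℕ) := {H : Submodule ℝ (Euc d) // Module.finrank ℝ H = k}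

/-- The ball `B(H,ε)` in the Grassmannian, for the angle metric. -/
def GrassBall {k d : ℕ} (H : Grass k d) (ε : ℝ) : Set (Grass k d) :=
  {K | subAngle H.1 K.1 ≤ ε}

instance {k d : ℕ} : MeasurableSpace (Grass k d) :=
  MeasurableSpace.generateFrom {S | ∃ H ε, S = GrassBall H ε}

/-- Action of an orthogonal transformation on the Grassmannian. -/
def rotGrass {k d : ℕ} (Q : Euc d ≃ₗᵢ[ℝ] Euc d) (H : Grass k d) : Grass k d :=
  ⟨H.1.map (Q.toLinearEquiv : Euc d →ₗ[ℝ] Euc d),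
    (LinearEquiv.finrank_map_eq _ _).trans H.2⟩

/-- A measure on the Grassmannian invariant under the orthogonal group `O(d)`. -/
def IsOrthInvariant {k d : ℕ} (lam : Measure (Grass k d)) : Prop :=
  ∀ Q : Euc d ≃ₗᵢ[ℝ] Euc d, ∀ S : Set (Grass k d), MeasurableSet S →
    lam (rotGrass Q ⁻¹' S) = lam S

/-- Partial derivative `∂_s f`. -/
def pd {k n : ℕ} (s : Fin k) (f : Euc k → Euc n) : Euc k → Euc n :=
  fun x => fderiv ℝ f x (EuclideanSpace.single s 1)

/-- Iterated partial derivatives along a list of directions. -/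
def pdIter {k n : ℕ} (l : List (Fin k)) (f : Euc k → Euc n) : Euc k → Euc n :=
  l.foldr pd f

/-- The list of directions associated to a multi-index. -/
def listOf {k : ℕ} (s : Fin k → ℕ) : List (Fin k) :=
  (List.finRange k).foldr (fun i l => List.replicate (s i) i ++ l) []

/-- Partial derivative `f^{(𝐬)}` of multi-order `𝐬`. -/
def mderiv {k n : ℕ} (s : Fin k → ℕ) (f : Euc k → Euc n) : Euc k → Euc n :=
  pdIter (listOf s) f

/-- `r = max {m ∈ ℕ : m < α}`. -/
def rr (α : ℝ) : ℕ := sSup {m : ℕ | (m : ℝ) < α}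

/-- The Hölder class `H^{k,n}(α,β)`. -/
def Holder (k n : ℕ) (α β : ℝ) : Set (Euc k → Euc n) :=
  {f | Set.MapsTo f (unitCube k) (unitCube n) ∧
    (∀ l : List (Fin k), l.length < rr α → Differentiable ℝ (pdIter l f)) ∧
    (∀ s : Fin k → ℕ, (∑ i, s i) ≤ rr α → ∀ x ∈ unitCube k, supNorm (mderiv s f x) ≤ β) ∧
    (∀ s : Fin k → ℕ, (∑ i, s i) = rr α → ∀ x ∈ unitCube k, ∀ y ∈ unitCube k,
      supNorm (mderiv s f x - mderiv s f y) ≤ β * supNorm (x - y) ^ (α - rr α))}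

/-- The tangent space `f⃗(x) = span {∂_s f(x) : s}`. -/
def tangent {k d : ℕ} (f : Euc k → Euc d) (x : Euc k) : Submodule ℝ (Euc d) :=
  Submodule.span ℝ (Set.range fun s => pd s f x)

/-- The class `𝓕` of the paper. -/
def ClassF (k d : ℕ) (β : ℝ) : Set (Euc k → Euc d) :=
  {f | Set.MapsTo f (unitCube k) (unitCube d) ∧
    Set.InjOn f (unitCube k) ∧
    Differentiable ℝ f ∧ (∀ s, Differentiable ℝ (pd s f)) ∧
    (∀ s, ∀ x ∈ unitCube k, 1/β ≤ supNorm (pd s f x) ∧ supNorm (pd s f x) ≤ β) ∧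
    (∀ s t, ∀ x ∈ unitCube k, supNorm (pd t (pd s f) x) ≤ β) ∧
    (1 < k → ∀ s, ∀ x ∈ unitCube k,
      1/(2*β*((d:ℝ) - k)) ≤ subAngle (Submodule.span ℝ {pd s f x})
        (Submodule.span ℝ ((fun t => pd t f x) '' {t | t ≠ s})))}

/-- `f` interpolates `(z, w) ∈ [0,1]^d × G(k,d)`. -/
def InterpF {k d : ℕ} (f : Euc k → Euc d) (p : Euc d × Grass k d) : Prop :=
  ∃ x ∈ unitCube k, f x = p.1 ∧ tangent f x = p.2.1

/-- `N_n^→(𝓕) = max_{f ∈ 𝓕} #{i : f interpolates (Z_i,W_i)}`. -/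
def NFmax (k d : ℕ) (β : ℝ) {n : ℕ} (ω : Fin n → Euc d × Grass k d) : ℕ :=
  ⨆ f : ClassF k d β, Nat.card {i : Fin n // InterpF f.1 (ω i)}

/-- The set `𝐒` of multi-indices of total order at most `r₀`. -/
def SIdx (k r0 : ℕ) := {s : Fin k → Fin (r0+1) // (∑ i, (s i : ℕ)) ≤ r0}

instance (k r0 : ℕ) : Fintype (SIdx k r0) := by unfold SIdx; infer_instance

/-- The multi-index in `ℕ^k` associated to an element of `𝐒`. -/
def toMulti {k r0 : ℕ} (s : SIdx k r0) : Fin k → ℕ := fun i => (s.1 i : ℕ)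

/-- The uniform probability measure on `[-β,β]^n`. -/
def boxUniform (n : ℕ) (β : ℝ) : Measure (Euc n) :=
  (ENNReal.ofReal ((2*β)^n))⁻¹ • volume.restrict {y : Euc n | ∀ j, y j ∈ Set.Icc (-β) β}

open Classical in
/-- The distribution of one observation `(X, Y^𝐒)` under the null hypothesis:
uniform on `[0,1]^k × [0,1]^{d-k} × [-β,β]^{(d-k)(|𝐒|-1)}`. -/
def obsMeasure (k d r0 : ℕ) (β : ℝ) : Measure (Euc k × (SIdx k r0 → Euc (d-k))) :=
  (cubeUniform k).prod (Measure.pi fun s : SIdx k r0 =>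
    if (∀ i, s.1 i = 0) then cubeUniform (d-k) else boxUniform (d-k) β)

/-- `f` interpolates `(x, y^𝐒)`. -/
def InterpH {k d r0 : ℕ} (f : Euc k → Euc (d-k))
    (p : Euc k × (SIdx k r0 → Euc (d-k))) : Prop :=
  ∀ s : SIdx k r0, mderiv (toMulti s) f p.1 = p.2 s

/-- `N_n^{(r₀)}(𝓗) = max_{f ∈ 𝓗} #{i : f interpolates (X_i, Y_i^𝐒)}`. -/
def NHmax (k d r0 : ℕ) (α β : ℝ) {n : ℕ}
    (ω : Fin n → Euc k × (SIdx k r0 → Euc (d-k))) : ℕ :=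
  ⨆ f : Holder k (d-k) α β, Nat.card {i : Fin n // InterpH f.1 (ω i)}

/-- `w = Σ_{s=0}^{r₀} (1 - s/α) C(s+k-1, k-1)`. -/
def wconst (k r0 : ℕ) (α : ℝ) : ℝ :=
  ∑ s ∈ Finset.range (r0+1), (1 - s/α) * (Nat.choose (s+k-1) (k-1))

/-- `ρ(r₀) = k / (k + α (d-k) w)`. -/
def rho (k d r0 : ℕ) (α : ℝ) : ℝ := k / (k + α*((d:ℝ)-k)*wconst k r0 α)

/-- Sup-norm of a function over the unit cube. -/
def funSup {k n : ℕ} (f : Euc k → Euc n) : ℝ := ⨆ x : unitCube k, supNorm (f x.1)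

/-- The discrepancy `Φ` on the Hölder class. -/
def Phi {k n : ℕ} (r0 : ℕ) (α : ℝ) (f g : Euc k → Euc n) : ℝ :=
  ⨆ s : SIdx k r0, funSup (fun x => mderiv (toMulti s) f x - mderiv (toMulti s) g x) ^
    (α / (α - ∑ i, (toMulti s i : ℝ)))

/-- The discrepancy `Φ` on the values `y^𝐒`. -/
def PhiPt {k n r0 : ℕ} (α : ℝ) (y1 y2 : SIdx k r0 → Euc n) : ℝ :=
  ⨆ s : SIdx k r0, supNorm (y1 s - y2 s) ^ (α / (α - ∑ i, (toMulti s i : ℝ)))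

/-- Concatenation `ℝ^k × ℝ^{d-k} → ℝ^d`, identifying `ℝ^d` with `ℝ^k × ℝ^{d-k}`. -/
def pairFun {k d : ℕ} (h : k ≤ d) (x : Euc k) (y : Euc (d-k)) : Euc d :=
  WithLp.toLp 2 (fun j => Fin.append x y (Fin.cast (Nat.add_sub_cancel' h).symm j))

/-- `ε = ε(n)`, the solution of `ε^{-k/α} = ε^{(d-k)w} n`. -/
def epsN (k d r0 : ℕ) (α : ℝ) (n : ℕ) : ℝ :=
  (n:ℝ) ^ (-(α / (k + α*((d:ℝ)-k)*wconst k r0 α)))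

/-- The cell `I_m` of sidelength `ε'` indexed by `m`. -/
def cellI {k : ℕ} (ε' : ℝ) (m : Fin k → ℕ) : Set (Euc k) :=
  {x | ∀ i, x i ∈ Set.Ico ((m i : ℝ) * ε') (((m i : ℝ) + 1) * ε')}

open Classical in
/-- The box `R_m = I_m × [ε/2,ε]^{d-k} × Π_{𝐬 ≠ 0} [0,ε_𝐬]^{d-k}`. -/
def Rset (k d r0 : ℕ) (α : ℝ) (ε ε' : ℝ) (m : Fin k → ℕ) :
    Set (Euc k × (SIdx k r0 → Euc (d-k))) :=
  {p | p.1 ∈ cellI ε' m ∧ ∀ s : SIdx k r0, ∀ j,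
    if (∀ i, s.1 i = 0) then p.2 s j ∈ Set.Icc (ε/2) ε
    else p.2 s j ∈ Set.Icc 0 (ε ^ (1 - (∑ i, (toMulti s i : ℝ))/α))}


lemma supNorm_nonneg' {n : ℕ} (x : Euc n) : 0 ≤ supNorm x :=
  Real.iSup_nonneg fun _ => abs_nonneg _

lemma supNorm_le_norm' {n : ℕ} (x : Euc n) : supNorm x ≤ ‖x‖ := by
  apply Real.iSup_le _ (norm_nonneg x)
  intro i
  have h := EuclideanSpace.norm_eq x
  rw [h]
  have h1 : |x i| = Real.sqrt (|x i| ^ 2) := (Real.sqrt_sq (abs_nonneg _)).symm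
  rw [h1]
  apply Real.sqrt_le_sqrt
  have : |x i| ^ 2 = ‖x i‖ ^ 2 := by rw [Real.norm_eq_abs]
  rw [this]
  exact Finset.single_le_sum (f := fun j => ‖x j‖ ^ 2) (fun j _ => by positivity) (Finset.mem_univ i)

lemma norm_le_sqrt_mul_supNorm' {n : ℕ} (x : Euc n) : ‖x‖ ≤ Real.sqrt n * supNorm x := by
  rw [EuclideanSpace.norm_eq, ← Real.sqrt_sq (supNorm_nonneg' x), ← Real.sqrt_mul (Nat.cast_nonneg n)]
  apply Real.sqrt_le_sqrt
  calc ∑ i, ‖x i‖ ^ 2 ≤ ∑ _i : Fin n, supNorm x ^ 2 := by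
        apply Finset.sum_le_sum; intro i _
        have h1 : |x i| ≤ supNorm x := le_ciSup (f := fun j => |x j|) (Set.Finite.bddAbove (Set.finite_range _)) i
        rw [Real.norm_eq_abs]
        nlinarith [abs_nonneg (x i)]
    _ = n * supNorm x ^ 2 := by simp [Finset.sum_const, Finset.card_univ]

lemma jordan_arccos {r : ℝ} (h0 : 0 ≤ r) :
    Real.arccos r ≤ Real.pi / 2 * Real.sqrt (1 - r ^ 2) := by
  have hθ : Real.arccos r ≤ Real.pi / 2 := Real.arccos_le_pi_div_two.2 h0
  have h1 := Real.mul_le_sin (Real.arccos_nonneg r) hθ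
  rw [Real.sin_arccos] at h1
  have hπ : 0 < Real.pi := Real.pi_pos
  have h2 := mul_le_mul_of_nonneg_left h1 (le_of_lt (half_pos hπ))
  calc Real.arccos r = Real.pi / 2 * (2 / Real.pi * Real.arccos r) := by field_simp
    _ ≤ Real.pi / 2 * Real.sqrt (1 - r ^ 2) := h2

lemma angle_sep {d : ℕ} {c3 : ℝ} {u : Euc d} (P : Submodule ℝ (Euc d))
    (h : c3 ≤ subAngle (Submodule.span ℝ {u}) P) {v : Euc d} (hvP : v ∈ P) (hv : v ≠ 0) :
    c3 ≤ Real.arccos (⟪u, v⟫ / (‖u‖ * ‖v‖)) := by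
  refine h.trans ?_
  unfold subAngle
  apply Real.iSup_le _ (Real.arccos_nonneg _)
  rintro ⟨w, hwS, hw0⟩
  obtain ⟨t, rfl⟩ := Submodule.mem_span_singleton.1 hwS
  have ht : t ≠ 0 := by rintro rfl; simp at hw0
  set σ : ℝ := if 0 < t then 1 else -1 with hσ
  have hσ1 : σ = 1 ∨ σ = -1 := by
    rcases lt_or_ge 0 t with h'|h'
    · left; simp [hσ, h']
    · right; simp [hσ, not_lt.2 h']
  have hσ0 : σ ≠ 0 := by rcases hσ1 with h'|h' <;> rw [h'] <;> norm_num
  have htσ : t * σ = |t| := by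
    rcases lt_or_ge 0 t with h'|h'
    · simp [hσ, h', abs_of_pos h']
    · have h'' : t < 0 := lt_of_le_of_ne h' ht
      simp [hσ, not_lt.2 h', abs_of_neg h'']
  have habsσ : |σ| = 1 := by rcases hσ1 with h'|h' <;> rw [h'] <;> norm_num
  have key : ⟪t • u, σ • v⟫ / (‖t • u‖ * ‖σ • v‖) = ⟪u, v⟫ / (‖u‖ * ‖v‖) := by
    rw [real_inner_smul_left, real_inner_smul_right, norm_smul, norm_smul,
      Real.norm_eq_abs, Real.norm_eq_abs, habsσ,
      show t * (σ * ⟪u, v⟫) = |t| * ⟪u, v⟫ by rw [← htσ]; ring, one_mul, mul_assoc,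
      mul_div_mul_left _ _ (abs_ne_zero.2 ht)]
  refine ciInf_le_of_le ⟨0, ?_⟩
    ⟨σ • v, Submodule.smul_mem _ _ hvP, smul_ne_zero hσ0 hv⟩ (le_of_eq (by rw [key]))
  rintro x ⟨p, rfl⟩; exact Real.arccos_nonneg _

lemma inner_ratio_le_cos {d : ℕ} {c3 : ℝ} (hc3 : 0 < c3) {u : Euc d}
    (P : Submodule ℝ (Euc d))
    (h : c3 ≤ subAngle (Submodule.span ℝ {u}) P) {v : Euc d} (hvP : v ∈ P) (hv : v ≠ 0) :
    ⟪u, v⟫ / (‖u‖ * ‖v‖) ≤ Real.cos (min c3 (Real.pi/2)) := by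
  have h1 := angle_sep P h hvP hv
  have hc3' : min c3 (Real.pi/2) ≤ Real.arccos (⟪u, v⟫ / (‖u‖ * ‖v‖)) :=
    le_trans (min_le_left _ _) h1
  have h2 := Real.cos_le_cos_of_nonneg_of_le_pi
    (le_of_lt (lt_min hc3 (by linarith [Real.pi_pos]))) (Real.arccos_le_pi _) hc3'
  have hb := abs_real_inner_div_norm_mul_norm_le_one u v
  rw [abs_le] at hb
  rwa [Real.cos_arccos hb.1 hb.2] at h2

lemma ratio_bound {W W' I B KD : ℝ} (hW : 0 < W) (hW' : 0 < W') (hB0 : 0 ≤ B)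
    (halg : W^2*W'^2 - I^2 ≤ W'^2*B^2) (hB : B ≤ KD*W) (hKD : 0 ≤ KD) :
    1 - (I/(W*W'))^2 ≤ KD^2 := by
  have hD : (0:ℝ) < W^2*W'^2 := by positivity
  have hBsq : B^2 ≤ KD^2*W^2 := by
    nlinarith [mul_le_mul hB hB hB0 (by positivity : (0:ℝ) ≤ KD*W)]
  have expand : (1 - (I/(W*W'))^2) * (W^2*W'^2) = W^2*W'^2 - I^2 := by
    field_simp
  have hmain : (1 - (I/(W*W'))^2) * (W^2*W'^2) ≤ KD^2 * (W^2*W'^2) := by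
    rw [expand]; nlinarith [halg, hBsq, sq_nonneg W']
  exact le_of_mul_le_mul_right hmain hD

/-- **Lemma 12.** If `u₁,…,u_k; v₁,…,v_k` have sup-norms in `[c₁,c₂]` and (when `k ≥ 2`)
pairwise angular separation at least `c₃`, then the angle between their spans is at most a
constant times `max_i ‖v_i - u_i‖_∞`. -/
theorem ang_spc (k d : ℕ) (hk : 1 ≤ k) (hkd : k ≤ d) (c1 c2 c3 : ℝ)
    (h1 : 0 < c1) (h2 : 0 < c2) (h3 : 0 < c3) :
    ∃ c : ℝ, 0 < c ∧ ∀ u v : Fin k → Euc d,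
      (∀ i, c1 ≤ supNorm (u i) ∧ supNorm (u i) ≤ c2) →
      (∀ i, c1 ≤ supNorm (v i) ∧ supNorm (v i) ≤ c2) →
      (2 ≤ k → ∀ i, c3 ≤ subAngle (Submodule.span ℝ {u i})
        (Submodule.span ℝ (u '' {j | j ≠ i}))) →
      (2 ≤ k → ∀ i, c3 ≤ subAngle (Submodule.span ℝ {v i})
        (Submodule.span ℝ (v '' {j | j ≠ i}))) →
      subAngle (Submodule.span ℝ (Set.range u)) (Submodule.span ℝ (Set.range v)) ≤
        c * ⨆ i, supNorm (v i - u i) := by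
  have hπ := Real.pi_pos
  set c3' := min c3 (Real.pi/2) with hc3'def
  have hc3'pos : 0 < c3' := lt_min h3 (by linarith)
  have hc3'le : c3' ≤ Real.pi/2 := min_le_right _ _
  set s := Real.sin c3' with hsdef
  have hs : 0 < s := Real.sin_pos_of_pos_of_lt_pi hc3'pos (by linarith)
  have hcos0 : 0 ≤ Real.cos c3' := Real.cos_nonneg_of_mem_Icc ⟨by linarith, hc3'le⟩
  have hpyth : Real.sin c3' ^ 2 + Real.cos c3' ^ 2 = 1 := Real.sin_sq_add_cos_sq _
  have hknat : 0 < k := hk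
  have hk0 : (0:ℝ) < k := by exact_mod_cast hk
  have hd0 : 0 < d := lt_of_lt_of_le hk hkd
  have hsd : 0 < Real.sqrt d := Real.sqrt_pos.2 (by exact_mod_cast hd0)
  set K0 := (k:ℝ) * Real.sqrt d / (s * c1) with hK0def
  have hK0 : 0 < K0 := by positivity
  refine ⟨2 * Real.pi * K0, by positivity, ?_⟩
  intro u v hu hv hau hav
  set δ := ⨆ i, supNorm (v i - u i) with hδdef
  have hδ0 : 0 ≤ δ := Real.iSup_nonneg fun i => supNorm_nonneg' _
  have hδi : ∀ i, supNorm (v i - u i) ≤ δ := fun i =>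
    le_ciSup (f := fun i => supNorm (v i - u i)) (Set.Finite.bddAbove (Set.finite_range _)) i
  have hRHS : 0 ≤ 2 * Real.pi * K0 * δ := by positivity
  show subAngle _ _ ≤ _
  unfold subAngle
  apply Real.iSup_le _ hRHS
  rintro ⟨w, hwH, hw0⟩
  obtain ⟨a, ha⟩ := (Submodule.mem_span_range_iff_exists_fun (R := ℝ)).1 hwH
  set w' := ∑ i, a i • v i with hw'def
  have hw'K : w' ∈ Submodule.span ℝ (Set.range v) :=
    Submodule.sum_mem _ fun i _ => Submodule.smul_mem _ _ (Submodule.subset_span ⟨i, rfl⟩)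
  have hwpos : 0 < ‖w‖ := norm_pos_iff.2 hw0
  -- Claim A
  have hA : ∀ i, |a i| * (s * c1) ≤ ‖w‖ := by
    intro i
    set P := Submodule.span ℝ (u '' {j | j ≠ i}) with hPdef
    set b : Euc d := (Submodule.orthogonalProjection P (u i) : Euc d) with hbdef
    set e : Euc d := u i - b with hedef
    have heP : e ∈ Pᗮ := Submodule.sub_starProjection_mem_orthogonal (K := P) (u i)
    have heperp : ∀ p ∈ P, ⟪p, e⟫ = 0 := fun p hp => (Submodule.mem_orthogonal P e).1 heP p hp
    have hbP : b ∈ P := SetLike.coe_mem _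
    have hbe : ⟪b, e⟫ = 0 := heperp b hbP
    have hui : u i = b + e := by rw [hedef]; abel
    have huin : c1 ≤ ‖u i‖ := le_trans (hu i).1 (supNorm_le_norm' _)
    have hb_le : ‖b‖ ≤ Real.cos c3' * ‖u i‖ := by
      rcases eq_or_ne b 0 with h0|h0
      · rw [h0, norm_zero]; positivity
      · have h2k : 2 ≤ k := by
          by_contra hlt
          have hk1 : k = 1 := by omega
          apply h0
          have hempty : {j : Fin k | j ≠ i} = ∅ := by
            ext j
            simp only [Set.mem_setOf_eq, Set.mem_empty_iff_false, iff_false, not_not]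
            subst hk1; exact Subsingleton.elim j i
          have hPbot : P = ⊥ := by rw [hPdef, hempty, Set.image_empty, Submodule.span_empty]
          simpa [hPbot, Submodule.mem_bot] using hbP
        have hr := inner_ratio_le_cos h3 P (hau h2k i) hbP h0
        have hbe' : ⟪e, b⟫ = 0 := by rw [real_inner_comm]; exact hbe
        have hib : ⟪u i, b⟫ = ‖b‖ ^ 2 := by
          rw [hui, inner_add_left, real_inner_self_eq_norm_sq, hbe']
          ring
        have hb0 : 0 < ‖b‖ := norm_pos_iff.2 h0
        have hr' : ⟪u i, b⟫ ≤ Real.cos c3' * (‖u i‖ * ‖b‖) := by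
          rw [div_le_iff₀ (mul_pos (lt_of_lt_of_le h1 huin) hb0)] at hr; linarith [hr]
        rw [hib] at hr'
        nlinarith [hb0]
    have hpyth2 : ‖u i‖ ^ 2 = ‖b‖ ^ 2 + ‖e‖ ^ 2 := by
      rw [hui, norm_add_sq_real, hbe]; ring
    have step1 : (s * ‖u i‖) ^ 2 ≤ ‖e‖ ^ 2 := by
      nlinarith [hb_le, hpyth2, hpyth, hcos0, norm_nonneg b, huin, h1,
        mul_le_mul hb_le hb_le (norm_nonneg b) (by positivity : (0:ℝ) ≤ Real.cos c3' * ‖u i‖)]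
    have step2 : s * ‖u i‖ ≤ ‖e‖ := by
      have := Real.sqrt_le_sqrt step1
      rwa [Real.sqrt_sq (by positivity), Real.sqrt_sq (norm_nonneg _)] at this
    have he : s * c1 ≤ ‖e‖ := le_trans (by nlinarith [hs, huin]) step2
    have hwe : ⟪w, e⟫ = a i * ‖e‖ ^ 2 := by
      rw [← ha, sum_inner, Finset.sum_eq_single i]
      · rw [real_inner_smul_left, hui, inner_add_left, hbe, real_inner_self_eq_norm_sq]
        ring
      · intro j _ hji
        rw [real_inner_smul_left, heperp (u j) (Submodule.subset_span ⟨j, hji, rfl⟩), mul_zero]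
      · intro hnot; exact absurd (Finset.mem_univ i) hnot
    have hCS := abs_real_inner_le_norm w e
    rw [hwe, abs_mul, abs_of_nonneg (by positivity : (0:ℝ) ≤ ‖e‖ ^ 2)] at hCS
    have he0 : 0 < ‖e‖ := lt_of_lt_of_le (by positivity) he
    calc |a i| * (s * c1) ≤ |a i| * ‖e‖ := mul_le_mul_of_nonneg_left he (abs_nonneg _)
      _ ≤ ‖w‖ := by nlinarith [hCS, he0, abs_nonneg (a i)]
  -- Claim B
  have hsum : w - w' = ∑ i, a i • (u i - v i) := by
    rw [← ha, hw'def, ← Finset.sum_sub_distrib]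
    exact Finset.sum_congr rfl fun i _ => (smul_sub _ _ _).symm
  have hB : ‖w - w'‖ ≤ K0 * δ * ‖w‖ := by
    rw [hsum]
    have hterm : ∀ i, ‖a i • (u i - v i)‖ ≤ (‖w‖ / (s * c1)) * (Real.sqrt d * δ) := by
      intro i
      rw [norm_smul, Real.norm_eq_abs]
      have h1' : ‖u i - v i‖ ≤ Real.sqrt d * δ := by
        refine le_trans (norm_le_sqrt_mul_supNorm' _) ?_
        have hcomm : supNorm (u i - v i) = supNorm (v i - u i) := by
          unfold supNorm
          congr 1; funext j
          rw [show (u i - v i) j = -((v i - u i) j) by simp, abs_neg]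
        rw [hcomm]
        exact mul_le_mul_of_nonneg_left (hδi i) (Real.sqrt_nonneg _)
      have h2' : |a i| ≤ ‖w‖ / (s * c1) := (le_div_iff₀ (by positivity)).2 (hA i)
      exact mul_le_mul h2' h1' (norm_nonneg _) (by positivity)
    calc ‖∑ i, a i • (u i - v i)‖ ≤ ∑ i, ‖a i • (u i - v i)‖ := norm_sum_le _ _
      _ ≤ ∑ _i : Fin k, (‖w‖ / (s * c1)) * (Real.sqrt d * δ) :=
          Finset.sum_le_sum fun i _ => hterm i
      _ = k * ((‖w‖ / (s * c1)) * (Real.sqrt d * δ)) := by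
          simp [Finset.sum_const, Finset.card_univ]
      _ = K0 * δ * ‖w‖ := by rw [hK0def]; field_simp
  -- conclusion
  have hbdd : BddBelow (Set.range fun p : {x : Euc d // x ∈ Submodule.span ℝ (Set.range v) ∧ x ≠ 0} =>
      Real.arccos (⟪w, p.1⟫ / (‖w‖ * ‖p.1‖))) :=
    ⟨0, by rintro x ⟨p, rfl⟩; exact Real.arccos_nonneg _⟩
  by_cases hcase : ‖w‖ / 2 ≤ ‖w - w'‖
  · have h12 : 1 / 2 ≤ K0 * δ := by nlinarith [le_trans hcase hB, hwpos]
    have hi0 : v ⟨0, hknat⟩ ∈ Submodule.span ℝ (Set.range v) :=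
      Submodule.subset_span ⟨⟨0, hknat⟩, rfl⟩
    have hv00 : v ⟨0, hknat⟩ ≠ 0 := by
      intro h0
      have hc := (hv ⟨0, hknat⟩).1
      rw [h0] at hc
      have hz : supNorm (0 : Euc d) ≤ ‖(0 : Euc d)‖ := supNorm_le_norm' _
      rw [norm_zero] at hz
      linarith
    refine le_trans (ciInf_le_of_le hbdd ⟨v ⟨0, hknat⟩, hi0, hv00⟩ (Real.arccos_le_pi _)) ?_
    nlinarith [hπ]
  · push_neg at hcase
    have hw'n : ‖w‖ / 2 < ‖w'‖ := by
      have h := norm_sub_norm_le w w'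
      linarith
    have hw'0 : w' ≠ 0 := norm_pos_iff.1 (by linarith)
    have hinn : ⟪w, w - w'⟫ ≤ ‖w‖ * ‖w - w'‖ :=
      le_trans (le_abs_self _) (abs_real_inner_le_norm _ _)
    have hww' : ‖w‖ ^ 2 - ‖w‖ * ‖w - w'‖ ≤ ⟪w, w'⟫ := by
      have hsplit : ⟪w, w'⟫ = ⟪w, w⟫ - ⟪w, w - w'⟫ := by
        rw [← inner_sub_right]; congr 1; abel
      rw [hsplit, real_inner_self_eq_norm_sq]; linarith
    have hIpos : 0 < ⟪w, w'⟫ := by nlinarith [hwpos, hcase, norm_nonneg (w - w')]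
    have hW' : 0 < ‖w'‖ := by linarith
    have hr0 : 0 ≤ ⟪w, w'⟫ / (‖w‖ * ‖w'‖) :=
      le_of_lt (div_pos hIpos (mul_pos hwpos hW'))
    refine le_trans (ciInf_le hbdd ⟨w', hw'K, hw'0⟩) ?_
    show Real.arccos (⟪w, w'⟫ / (‖w‖ * ‖w'‖)) ≤ _
    have hj := jordan_arccos hr0
    have halg : ‖w‖^2 * ‖w'‖^2 - ⟪w,w'⟫^2 ≤ ‖w'‖^2 * ‖w - w'‖^2 := by
      nlinarith [norm_sub_sq_real w w', sq_nonneg (‖w'‖^2 - ⟪w,w'⟫)]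
    have h1r : 1 - (⟪w, w'⟫ / (‖w‖ * ‖w'‖))^2 ≤ (K0*δ)^2 :=
      ratio_bound hwpos hW' (norm_nonneg (w - w')) halg
        (by linarith [hB] : ‖w - w'‖ ≤ (K0*δ)*‖w‖) (by positivity)
    have hkey : Real.sqrt (1 - (⟪w, w'⟫ / (‖w‖ * ‖w'‖))^2) ≤ K0 * δ :=
      le_trans (Real.sqrt_le_sqrt h1r) (le_of_eq (Real.sqrt_sq (by positivity)))
    calc Real.arccos (⟪w, w'⟫ / (‖w‖ * ‖w'‖))
        ≤ Real.pi/2 * Real.sqrt (1 - (⟪w, w'⟫ / (‖w‖ * ‖w'‖))^2) := hj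
      _ ≤ Real.pi/2 * (K0*δ) := mul_le_mul_of_nonneg_left hkey (by positivity)
      _ ≤ 2*Real.pi*K0*δ := by nlinarith [hπ, hK0, hδ0]
end
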